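/- Let u : ℝ² → ℝ be smooth and let p be a point where sin(u(p)/2) cos(u(p)/2) ≠ 0. With f₁₁ = cos(u/2), f₁₂ = cos(u/2), f₂₁ = sin(u/2), f₂₂ = −sin(u/2), f₃₁ = u_x/2, f₃₂ = −u_t/2, and with a = tan(u/2), b = 0, c = −cot(u/2), the Gauss equation ac − b² = −1 and the Codazzi equations f₁₁ ∂_t a + f₂₁ ∂_t b − f₁₂ ∂_x a − f₂₂ ∂_x b − 2bΔ₁₃ + (a−c)Δ₂₃ = 0 and f₁₁ ∂_t b + f₂₁ ∂_t c − f₁₂ ∂_x b − f₂₂ ∂_x c + (a−c)Δ₁₃ + 2bΔ₂₃ = 0 hold at p, where Δ₁₃ = f₁₁f₃₂ − f₃₁f₁₂ and Δ₂₃ = f₂₁f₃₂ − f₃₁f₂₂. In particular, for every solution of the sine-Gordon equation u_{xt} = sin u with sin(u/2)cos(u/2) ≠ 0, the functions a = tan(u/2), b = 0, c = −cot(u/2) are the coefficients of the second fundamental form of a local isometric immersion into E³ of the associated pseudo-spherical metric, and they depend only on u. -/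

import Mathlib

/-- for the sine-Gordon `1`-forms `f₁₁ = f₁₂ = cos(u/2)`, `f₂₁ = sin(u/2)`,
`f₂₂ = -sin(u/2)`, `f₃₁ = u_x/2`, `f₃₂ = -u_t/2`, the functions `a = tan(u/2)`, `b = 0`,
`c = -cot(u/2)` satisfy the Gauss equation and both Codazzi equations at every point where
`sin(u/2) cos(u/2) ≠ 0`. -/
theorem sine_gordon_second_fundamental_form
    (u : ℝ → ℝ → ℝ)
    (hu : ContDiff ℝ (⊤ : ℕ∞) (fun p : ℝ × ℝ => u p.1 p.2))
    (x t : ℝ)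
    (hp : Real.sin (u x t / 2) * Real.cos (u x t / 2) ≠ 0) :
    Real.tan (u x t / 2) * (-(Real.cos (u x t / 2) / Real.sin (u x t / 2))) - (0 : ℝ) ^ 2
      = -1 ∧
    Real.cos (u x t / 2) * deriv (fun s => Real.tan (u x s / 2)) t
      + Real.sin (u x t / 2) * deriv (fun _ : ℝ => (0 : ℝ)) t
      - Real.cos (u x t / 2) * deriv (fun s => Real.tan (u s t / 2)) x
      - (-Real.sin (u x t / 2)) * deriv (fun _ : ℝ => (0 : ℝ)) x
      - 2 * 0 * (Real.cos (u x t / 2) * (-(deriv (fun s => u x s) t) / 2)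
          - deriv (fun s => u s t) x / 2 * Real.cos (u x t / 2))
      + (Real.tan (u x t / 2) - (-(Real.cos (u x t / 2) / Real.sin (u x t / 2))))
          * (Real.sin (u x t / 2) * (-(deriv (fun s => u x s) t) / 2)
            - deriv (fun s => u s t) x / 2 * (-Real.sin (u x t / 2))) = 0 ∧
    Real.cos (u x t / 2) * deriv (fun _ : ℝ => (0 : ℝ)) t
      + Real.sin (u x t / 2)
          * deriv (fun s => -(Real.cos (u x s / 2) / Real.sin (u x s / 2))) t
      - Real.cos (u x t / 2) * deriv (fun _ : ℝ => (0 : ℝ)) x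
      - (-Real.sin (u x t / 2))
          * deriv (fun s => -(Real.cos (u s t / 2) / Real.sin (u s t / 2))) x
      + (Real.tan (u x t / 2) - (-(Real.cos (u x t / 2) / Real.sin (u x t / 2))))
          * (Real.cos (u x t / 2) * (-(deriv (fun s => u x s) t) / 2)
            - deriv (fun s => u s t) x / 2 * Real.cos (u x t / 2))
      + 2 * 0 * (Real.sin (u x t / 2) * (-(deriv (fun s => u x s) t) / 2)
          - deriv (fun s => u s t) x / 2 * (-Real.sin (u x t / 2))) = 0 := by
  have hS : Real.sin (u x t / 2) ≠ 0 := fun h => hp (by rw [h]; ring)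
  have hC : Real.cos (u x t / 2) ≠ 0 := fun h => hp (by rw [h]; ring)
  set S := Real.sin (u x t / 2) with hSdef
  set C := Real.cos (u x t / 2) with hCdef
  have hpyth : S ^ 2 + C ^ 2 = 1 := Real.sin_sq_add_cos_sq _
  have hdiff : Differentiable ℝ (fun p : ℝ × ℝ => u p.1 p.2) := hu.differentiable (by simp)
  -- derivatives of the slices
  have hg1 : HasDerivAt (fun s => u x s) (deriv (fun s => u x s) t) t := by
    have : DifferentiableAt ℝ (fun s => u x s) t := by
      have := (hdiff (x, t)).comp t
        (DifferentiableAt.prodMk (differentiableAt_const x) differentiableAt_fun_id)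
      exact this
    exact this.hasDerivAt
  have hg2 : HasDerivAt (fun s => u s t) (deriv (fun s => u s t) x) x := by
    have : DifferentiableAt ℝ (fun s => u s t) x := by
      have := (hdiff (x, t)).comp x
        (DifferentiableAt.prodMk (differentiableAt_fun_id : DifferentiableAt ℝ (fun s : ℝ => s) x) (differentiableAt_const t))
      exact this
    exact this.hasDerivAt
  set ut := deriv (fun s => u x s) t
  set ux := deriv (fun s => u s t) x
  have hh1 : HasDerivAt (fun s => u x s / 2) (ut / 2) t := hg1.div_const 2
  have hh2 : HasDerivAt (fun s => u s t / 2) (ux / 2) x := hg2.div_const 2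
  -- derivative of tan composites
  have htan1 : deriv (fun s => Real.tan (u x s / 2)) t = (1 / C ^ 2) * (ut / 2) := by
    exact ((Real.hasDerivAt_tan hC).comp t hh1).deriv
  have htan2 : deriv (fun s => Real.tan (u s t / 2)) x = (1 / C ^ 2) * (ux / 2) := by
    exact ((Real.hasDerivAt_tan hC).comp x hh2).deriv
  -- derivative of -(cos/sin) composites
  have hcot : HasDerivAt (fun θ => -(Real.cos θ / Real.sin θ)) (1 / S ^ 2) (u x t / 2) := by
    have h := ((Real.hasDerivAt_cos (u x t / 2)).div (Real.hasDerivAt_sin (u x t / 2)) hS).neg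
    refine HasDerivAt.congr_deriv h ?_
    rw [← hSdef, ← hCdef]
    field_simp
    nlinarith [hpyth]
  have hcot1 : deriv (fun s => -(Real.cos (u x s / 2) / Real.sin (u x s / 2))) t
      = (1 / S ^ 2) * (ut / 2) := by have := (hcot.comp t hh1).deriv; exact this
  have hcot2 : deriv (fun s => -(Real.cos (u s t / 2) / Real.sin (u s t / 2))) x
      = (1 / S ^ 2) * (ux / 2) := by have := (hcot.comp x hh2).deriv; exact this
  have htanv : Real.tan (u x t / 2) = S / C := Real.tan_eq_sin_div_cos _
  refine ⟨?_, ?_, ?_⟩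
  · rw [htanv]; field_simp; ring
  · rw [htan1, htan2, htanv]
    simp only [deriv_const']
    field_simp
    linear_combination (ux - ut) * hpyth
  · rw [hcot1, hcot2, htanv]
    simp only [deriv_const']
    field_simp
    linear_combination (-(ut+ux)) * hpyth
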